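/- arXiv:2409.04496 — 4 statements merged into one kernel-verified Lean document; each statement's English description precedes it below -/
import Mathlib

section
/- Let (E,d) be a complete separable metric space, Θ an index set, and (μ_n^θ)_{n≥1,θ∈Θ}, (μ^θ)_{θ∈Θ} Borel probability measures on E that are uniformly tight: for each ε>0 there is a compact K⊆E with sup_θ sup_n μ_n^θ(Kᶜ) + sup_θ μ^θ(Kᶜ) < ε. If for every bounded Lipschitz continuous f: E → ℝ one has sup_θ |∫ f dμ_n^θ − ∫ f dμ^θ| → 0 as n → ∞, then the same convergence holds for every bounded continuous f: E → ℝ. -/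
open MeasureTheory Filter
open scoped Uniformity

/-- Uniform weak convergence upgrade: on a Polish space, uniform tightness plus
uniform convergence of integrals for bounded Lipschitz test functions implies
uniform convergence of integrals for all bounded continuous test functions. -/
theorem stmt0
    {E : Type*} [MetricSpace E] [CompleteSpace E] [TopologicalSpace.SeparableSpace E]
    [MeasurableSpace E] [BorelSpace E]
    {Θ : Type*}
    (μ : ℕ → Θ → Measure E) (ν : Θ → Measure E)
    (hμ : ∀ n θ, IsProbabilityMeasure (μ n θ)) (hν : ∀ θ, IsProbabilityMeasure (ν θ))
    (htight : ∀ ε > (0 : ℝ), ∃ K : Set E, IsCompact K ∧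
      ∀ n θ θ', ((μ n θ) Kᶜ).toReal + ((ν θ') Kᶜ).toReal < ε)
    (hLip : ∀ f : E → ℝ, (∃ C, LipschitzWith C f) → (∃ M, ∀ x, |f x| ≤ M) →
      ∀ ε > (0 : ℝ), ∃ N, ∀ n ≥ N, ∀ θ,
        |∫ x, f x ∂(μ n θ) - ∫ x, f x ∂(ν θ)| < ε) :
    ∀ f : E → ℝ, Continuous f → (∃ M, ∀ x, |f x| ≤ M) →
      ∀ ε > (0 : ℝ), ∃ N, ∀ n ≥ N, ∀ θ,
        |∫ x, f x ∂(μ n θ) - ∫ x, f x ∂(ν θ)| < ε := by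
  intro f hf hMbd ε hε
  rcases isEmpty_or_nonempty Θ with hΘ | ⟨⟨θ₀⟩⟩
  · exact ⟨0, fun n _ θ => (IsEmpty.false θ).elim⟩
  have hEne : Nonempty E := by
    by_contra h
    have : (ν θ₀) Set.univ = 1 := (hν θ₀).measure_univ
    rw [Set.univ_eq_empty_iff.mpr (not_nonempty_iff.mp h), measure_empty] at this
    exact zero_ne_one this
  obtain ⟨M₀, hM₀⟩ := hMbd
  set M : ℝ := max M₀ 0 with hMdef
  have hM0 : 0 ≤ M := le_max_right _ _
  have hM : ∀ x, |f x| ≤ M := fun x => (hM₀ x).trans (le_max_left _ _)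
  -- tightness
  obtain ⟨K, hK, hKtight⟩ := htight (ε / (8 * M + 4)) (by positivity)
  -- uniform continuity near K
  obtain ⟨δ, hδpos, hδf⟩ : ∃ δ > (0:ℝ), ∀ x ∈ K, ∀ y, dist x y < δ → |f x - f y| < ε / 8 := by
    have hr : {p : ℝ × ℝ | dist p.1 p.2 < ε / 8} ∈ 𝓤 ℝ :=
      Metric.dist_mem_uniformity (by positivity)
    have := hK.uniformContinuousAt_of_continuousAt f (fun a _ => hf.continuousAt) hr
    rw [Metric.mem_uniformity_dist] at this
    obtain ⟨δ, hδpos, hδ⟩ := this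
    refine ⟨δ, hδpos, fun x hx y hxy => ?_⟩
    have := hδ (a := x) (b := y) hxy hx
    simpa [Real.dist_eq] using this
  -- Lipschitz approximation
  set L : ℝ := 2 * M / δ with hLdef
  have hL0 : 0 ≤ L := by positivity
  set g : E → ℝ := fun x => ⨅ y, f y + L * dist x y with hgdef
  have hbdd : ∀ x : E, BddBelow (Set.range fun y => f y + L * dist x y) := by
    intro x
    refine ⟨-M, fun r ⟨y, hy⟩ => ?_⟩
    rw [← hy]
    show -M ≤ f y + L * dist x y
    have : -M ≤ f y := by cases abs_le.mp (hM y); linarith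
    nlinarith [dist_nonneg (x := x) (y := y)]
  have hgle : ∀ x, g x ≤ f x := by
    intro x
    have : g x ≤ f x + L * dist x x := ciInf_le (hbdd x) x
    simpa using this
  have hgge : ∀ x, -M ≤ g x := by
    intro x
    refine le_ciInf fun y => ?_
    have : -M ≤ f y := by cases abs_le.mp (hM y); linarith
    nlinarith [dist_nonneg (x := x) (y := y)]
  have hgM : ∀ x, |g x| ≤ M := fun x =>
    abs_le.mpr ⟨hgge x, (hgle x).trans ((abs_le.mp (hM x)).2)⟩
  have hgLip : LipschitzWith (Real.toNNReal L) g := by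
    apply LipschitzWith.of_dist_le_mul
    intro x x'
    have key : ∀ a b : E, g a ≤ g b + L * dist a b := by
      intro a b
      have : g a ≤ ⨅ y, (f y + L * dist b y) + L * dist a b := by
        refine le_ciInf fun y => ?_
        calc g a ≤ f y + L * dist a y := ciInf_le (hbdd a) y
          _ ≤ (f y + L * dist b y) + L * dist a b := by
              nlinarith [dist_triangle a b y]
      rwa [← ciInf_add (hbdd b)] at this
    rw [Real.dist_eq, Real.coe_toNNReal L hL0]
    rw [abs_le]
    constructor
    · have := key x' x
      rw [dist_comm x' x] at this
      linarith
    · linarith [key x x']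
  have hgK : ∀ x ∈ K, f x - g x ≤ ε / 8 := by
    intro x hx
    have : f x - ε / 8 ≤ g x := by
      refine le_ciInf fun y => ?_
      by_cases hd : dist x y < δ
      · have := hδf x hx y hd
        have h1 := (abs_lt.mp this).2
        nlinarith [dist_nonneg (x := x) (y := y)]
      · push_neg at hd
        have h1 : -M ≤ f y := by cases abs_le.mp (hM y); linarith
        have h2 : f x ≤ M := (abs_le.mp (hM x)).2
        have h3 : 2 * M ≤ L * dist x y := by
          rw [hLdef]
          rw [div_mul_eq_mul_div, le_div_iff₀ hδpos]
          nlinarith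
        linarith
    linarith
  -- apply hLip to g
  obtain ⟨N, hN⟩ := hLip g ⟨Real.toNNReal L, hgLip⟩ ⟨M, hgM⟩ (ε / 2) (by positivity)
  refine ⟨N, fun n hn θ => ?_⟩
  haveI := hμ n θ
  haveI := hν θ
  -- integrability
  have hmeasK : MeasurableSet Kᶜ := hK.isClosed.measurableSet.compl
  have hint : ∀ (m : Measure E), IsProbabilityMeasure m →
      Integrable f m ∧ Integrable g m := by
    intro m hm
    constructor
    · refine ⟨hf.aestronglyMeasurable, ?_⟩
      exact HasFiniteIntegral.of_bounded (C := M) (Eventually.of_forall fun x => by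
        simpa [Real.norm_eq_abs] using hM x)
    · refine ⟨hgLip.continuous.aestronglyMeasurable, ?_⟩
      exact HasFiniteIntegral.of_bounded (C := M) (Eventually.of_forall fun x => by
        simpa [Real.norm_eq_abs] using hgM x)
  -- key estimate : for any prob measure m, |∫ f - ∫ g| ≤ ε/8 + 2M * m Kᶜ
  have hest : ∀ (m : Measure E), IsProbabilityMeasure m →
      |∫ x, f x ∂m - ∫ x, g x ∂m| ≤ ε / 8 + 2 * M * (m Kᶜ).toReal := by
    intro m hm
    obtain ⟨hintf, hintg⟩ := hint m hm
    have hsub : Integrable (fun x => f x - g x) m := hintf.sub hintg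
    rw [← integral_sub hintf hintg]
    have hptwise : ∀ x, |f x - g x| ≤ ε / 8 + Kᶜ.indicator (fun _ => 2 * M) x := by
      intro x
      by_cases hx : x ∈ K
      · rw [Set.indicator_of_notMem (by simpa using hx)]
        have h1 := hgK x hx
        have h2 := hgle x
        rw [abs_le]; constructor <;> linarith
      · rw [Set.indicator_of_mem (by simpa using hx)]
        have h1 := abs_le.mp (hM x)
        have h2 := abs_le.mp (hgM x)
        rw [abs_le]; constructor <;> [linarith; linarith]
    have hintind : Integrable (Kᶜ.indicator (fun _ => 2 * M)) m :=
      (integrable_const (2 * M)).indicator hmeasK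
    calc |∫ x, (f x - g x) ∂m| ≤ ∫ x, |f x - g x| ∂m := by
          simpa [Real.norm_eq_abs] using
            norm_integral_le_integral_norm (μ := m) (fun x => f x - g x)
      _ ≤ ∫ x, (ε / 8 + Kᶜ.indicator (fun _ => 2 * M) x) ∂m := by
          refine integral_mono hsub.abs ((integrable_const (ε/8)).add hintind) hptwise
      _ = ε / 8 + 2 * M * (m Kᶜ).toReal := by
          rw [integral_add (integrable_const _) hintind, integral_const,
            integral_indicator_const _ hmeasK]
          simp [measure_univ, smul_eq_mul, mul_comm]
          exact Or.inl rfl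
  have h1 := hest (μ n θ) (hμ n θ)
  have h2 := hest (ν θ) (hν θ)
  have h3 := hN n hn θ
  have h4 := hKtight n θ θ
  have hμ0 : 0 ≤ ((μ n θ) Kᶜ).toReal := ENNReal.toReal_nonneg
  have hν0 : 0 ≤ ((ν θ) Kᶜ).toReal := ENNReal.toReal_nonneg
  have htot : 2 * M * (((μ n θ) Kᶜ).toReal + ((ν θ) Kᶜ).toReal) ≤ ε / 2 - ε / 4 := by
    have : 2 * M * (((μ n θ) Kᶜ).toReal + ((ν θ) Kᶜ).toReal) ≤ 2 * M * (ε / (8 * M + 4)) := by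
      apply mul_le_mul_of_nonneg_left (le_of_lt h4) (by positivity)
    refine this.trans ?_
    rw [mul_div_assoc', div_le_iff₀ (by positivity)]
    nlinarith
  calc |∫ x, f x ∂(μ n θ) - ∫ x, f x ∂(ν θ)|
      ≤ |∫ x, f x ∂(μ n θ) - ∫ x, g x ∂(μ n θ)| + |∫ x, g x ∂(μ n θ) - ∫ x, g x ∂(ν θ)|
        + |∫ x, g x ∂(ν θ) - ∫ x, f x ∂(ν θ)| := by
        have := abs_sub_abs_le_abs_sub (∫ x, f x ∂(μ n θ)) (∫ x, f x ∂(ν θ))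
        calc |∫ x, f x ∂(μ n θ) - ∫ x, f x ∂(ν θ)|
            = |(∫ x, f x ∂(μ n θ) - ∫ x, g x ∂(μ n θ)) + (∫ x, g x ∂(μ n θ) - ∫ x, g x ∂(ν θ))
              + (∫ x, g x ∂(ν θ) - ∫ x, f x ∂(ν θ))| := by ring_nf
          _ ≤ _ := by
              refine (abs_add_le _ _).trans ?_
              gcongr
              exact abs_add_le _ _
    _ < ε := by
        rw [abs_sub_comm (∫ x, g x ∂(ν θ))] at *
        have h2' : |∫ x, f x ∂(ν θ) - ∫ x, g x ∂(ν θ)| ≤ ε / 8 + 2 * M * ((ν θ) Kᶜ).toReal := h2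
        linarith
end

section
/- Let (E,d), (E',d') be complete separable metric spaces, F: E → E' measurable with set of discontinuity points D_F, (X_n^θ), (X^θ) E-valued random variables. Suppose there exists a probability measure μ on E such that for each ε>0 there is δ>0 with: μ(A) < δ implies sup_θ P[X^θ ∈ A] < ε for all Borel A⊆E. If X_n^θ ⇒ X^θ weakly uniformly on Θ and P[X^θ ∈ D_F] = 0 for all θ, then F(X_n^θ) ⇒ F(X^θ) weakly uniformly on Θ. -/
open MeasureTheory Filter Topology

/-- McShane-type approximation: a bounded function with small oscillation at scale `r`
on a set `s` admits a bounded continuous function agreeing with it up to `κ` on `s`. -/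
lemma mcshane_approx {E : Type*} [MetricSpace E] (h : E → ℝ) (M κ r : ℝ)
    (hM : ∀ x, |h x| ≤ M) (hr : 0 < r) (hκ : 0 ≤ κ)
    (s : Set E) (hs : s.Nonempty)
    (hosc : ∀ x ∈ s, ∀ y, dist x y < r → |h y - h x| ≤ κ) :
    ∃ ψ : BoundedContinuousFunction E ℝ, (∀ x, |ψ x| ≤ M) ∧ ∀ x ∈ s, |ψ x - h x| ≤ κ := by
  obtain ⟨x₀, hx₀⟩ := hs
  have hM0 : 0 ≤ M := (abs_nonneg _).trans (hM x₀)
  set L : ℝ := 2 * M / r with hL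
  have hL0 : 0 ≤ L := by positivity
  set φ : E → ℝ := fun x => sInf ((fun y => h y + L * dist x y) '' s) with hφ
  have hne : ∀ x : E, ((fun y => h y + L * dist x y) '' s).Nonempty :=
    fun x => ⟨_, ⟨x₀, hx₀, rfl⟩⟩
  have hbdd : ∀ x : E, ∀ z ∈ ((fun y => h y + L * dist x y) '' s), -M ≤ z := by
    rintro x z ⟨y, hy, rfl⟩
    dsimp only
    have := (abs_le.1 (hM y)).1
    nlinarith [dist_nonneg (x := x) (y := y), mul_nonneg hL0 (dist_nonneg (x := x) (y := y))]
  have hbdd' : ∀ x : E, BddBelow ((fun y => h y + L * dist x y) '' s) :=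
    fun x => ⟨-M, fun z hz => hbdd x z hz⟩
  have hlb : ∀ x, -M ≤ φ x := fun x => le_csInf (hne x) (hbdd x)
  have hlip : ∀ x x', φ x ≤ φ x' + L * dist x x' := by
    intro x x'
    rw [← sub_le_iff_le_add]
    apply le_csInf (hne x')
    rintro z ⟨y, hy, rfl⟩
    rw [sub_le_iff_le_add]
    calc φ x ≤ h y + L * dist x y := csInf_le (hbdd' x) ⟨y, hy, rfl⟩
      _ ≤ h y + L * dist x' y + L * dist x x' := by
          have := dist_triangle x x' y
          nlinarith
  have hub : ∀ x ∈ s, φ x ≤ h x := by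
    intro x hx
    have : φ x ≤ h x + L * dist x x := csInf_le (hbdd' x) ⟨x, hx, rfl⟩
    simpa using this
  have hlb2 : ∀ x ∈ s, h x - κ ≤ φ x := by
    intro x hx
    apply le_csInf (hne x)
    rintro z ⟨y, hy, rfl⟩
    dsimp only
    rcases lt_or_ge (dist x y) r with hd | hd
    · have h1 : |h y - h x| ≤ κ := hosc x hx y hd
      have := (abs_le.1 h1).1
      nlinarith [mul_nonneg hL0 (dist_nonneg (x := x) (y := y))]
    · have h1 : L * r ≤ L * dist x y := mul_le_mul_of_nonneg_left hd hL0
      have h2 : L * r = 2 * M := by rw [hL]; field_simp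
      have := (abs_le.1 (hM y)).1
      have := (abs_le.1 (hM x)).2
      nlinarith
  have hlipφ : LipschitzWith (Real.toNNReal L) φ := by
    apply LipschitzWith.of_dist_le_mul
    intro x y
    rw [Real.dist_eq, Real.coe_toNNReal _ hL0, abs_le]
    constructor
    · have := hlip y x
      rw [dist_comm y x] at *
      linarith [hlip y x, dist_comm x y ▸ (hlip y x)]
    · linarith [hlip x y]
  set ψ : E → ℝ := fun x => max (-M) (min M (φ x)) with hψ
  have hψc : Continuous ψ :=
    continuous_const.max (continuous_const.min hlipφ.continuous)
  have hψb : ∀ x, |ψ x| ≤ M := by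
    intro x
    rw [abs_le]
    refine ⟨le_max_left _ _, max_le (by linarith) (min_le_left _ _)⟩
  refine ⟨BoundedContinuousFunction.ofNormedAddCommGroup ψ hψc M
    (fun x => by rw [Real.norm_eq_abs]; exact hψb x), fun x => ?_, fun x hx => ?_⟩
  · simpa using hψb x
  · have h1 : φ x ≤ M := (hub x hx).trans ((abs_le.1 (hM x)).2)
    have h2 : ψ x = φ x := by
      rw [hψ]
      simp only [min_eq_right h1, max_eq_right (hlb x)]
    rw [BoundedContinuousFunction.coe_ofNormedAddCommGroup]
    rw [h2, abs_le]
    constructor <;> [linarith [hlb2 x hx]; linarith [hub x hx, hκ]]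
open MeasureTheory Filter

lemma integrable_bdd {Ω : Type*} [MeasurableSpace Ω] (P : Measure Ω) [IsFiniteMeasure P]
    (u : Ω → ℝ) (hm : Measurable u) (M : ℝ) (hb : ∀ ω, |u ω| ≤ M) : Integrable u P :=
  (integrable_const M).mono' hm.aestronglyMeasurable (ae_of_all _ fun ω => by
    rw [Real.norm_eq_abs]; exact hb ω)

lemma int_diff_le {Ω : Type*} [MeasurableSpace Ω] (P : Measure Ω) [IsProbabilityMeasure P]
    (u v : Ω → ℝ) (hu : Integrable u P) (hv : Integrable v P)
    (S : Set Ω) (hS : MeasurableSet S) (κ C : ℝ)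
    (hb : ∀ ω, |u ω - v ω| ≤ κ + S.indicator (fun _ => C) ω) :
    |∫ ω, u ω ∂P - ∫ ω, v ω ∂P| ≤ κ + (P S).toReal * C := by
  rw [← integral_sub hu hv]
  have h1 : |∫ ω, (u ω - v ω) ∂P| ≤ ∫ ω, |u ω - v ω| ∂P := by
    simpa [Real.norm_eq_abs] using norm_integral_le_integral_norm (fun ω => u ω - v ω) (μ := P)
  refine h1.trans ?_
  calc ∫ ω, |u ω - v ω| ∂P ≤ ∫ ω, (κ + S.indicator (fun _ => C) ω) ∂P :=
        integral_mono (hu.sub hv).abs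
          ((integrable_const κ).add ((integrable_const C).indicator hS)) (fun ω => hb ω)
    _ = κ + (P S).toReal * C := by
        rw [integral_add (integrable_const κ) ((integrable_const C).indicator hS),
          integral_const, integral_indicator_const _ hS]
        simp [measure_univ, Measure.real]

/-- Uniform continuous mapping theorem for weak convergence uniformly on Θ, under a
uniform absolute-continuity-type domination of the limit laws and a.s. continuity of F. -/
theorem stmt3
    {E E' : Type*} [MetricSpace E] [CompleteSpace E] [TopologicalSpace.SeparableSpace E]
    [MeasurableSpace E] [BorelSpace E]
    [MetricSpace E'] [CompleteSpace E'] [TopologicalSpace.SeparableSpace E']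
    [MeasurableSpace E'] [BorelSpace E']
    {Θ : Type*} {Ω : Type*} [MeasurableSpace Ω] (P : Measure Ω) [IsProbabilityMeasure P]
    (X : ℕ → Θ → Ω → E) (Y : Θ → Ω → E) (F : E → E')
    (hXmeas : ∀ n θ, Measurable (X n θ)) (hYmeas : ∀ θ, Measurable (Y θ))
    (hFmeas : Measurable F)
    (μ : Measure E) (hμ : IsProbabilityMeasure μ)
    (hdom : ∀ ε > (0 : ℝ), ∃ δ > (0 : ℝ), ∀ A : Set E, MeasurableSet A →
      μ A < ENNReal.ofReal δ → ∀ θ, P (Y θ ⁻¹' A) < ENNReal.ofReal ε)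
    (hweak : ∀ f : BoundedContinuousFunction E ℝ, ∀ ε > (0 : ℝ), ∃ N, ∀ n ≥ N, ∀ θ,
      |∫ ω, f (X n θ ω) ∂P - ∫ ω, f (Y θ ω) ∂P| < ε)
    (hcont : ∀ θ, P (Y θ ⁻¹' {x | ¬ ContinuousAt F x}) = 0) :
    ∀ g : BoundedContinuousFunction E' ℝ, ∀ ε > (0 : ℝ), ∃ N, ∀ n ≥ N, ∀ θ,
      |∫ ω, g (F (X n θ ω)) ∂P - ∫ ω, g (F (Y θ ω)) ∂P| < ε := by
  intro g ε hε
  rcases isEmpty_or_nonempty Θ with hΘ | hΘ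
  · exact ⟨0, fun n _ θ => (hΘ.false θ).elim⟩
  obtain ⟨θ₀⟩ := hΘ
  set M := ‖g‖ with hMdef
  have hM0 : 0 ≤ M := norm_nonneg g
  set h : E → ℝ := fun x => g (F x) with hhdef
  have hhb : ∀ x, |h x| ≤ M := fun x => by
    simpa [Real.norm_eq_abs] using g.norm_coe_le_norm (F x)
  have hhmeas : Measurable h := g.continuous.measurable.comp hFmeas
  set κ := ε / 4 with hκdef
  have hκpos : 0 < κ := by positivity
  set ε₁ := min (ε / (16 * (M + 1))) (1 / 2) with hε₁def
  have hε₁pos : 0 < ε₁ := lt_min (by positivity) one_half_pos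
  have hε₁half : ε₁ ≤ 1 / 2 := min_le_right _ _
  have hε₁le : ε₁ ≤ ε / (16 * (M + 1)) := min_le_left _ _
  obtain ⟨δ₀, hδ₀pos, hδ₀⟩ := hdom ε₁ hε₁pos
  set D := {x : E | ¬ ContinuousAt F x} with hDdef
  have hDmeas : MeasurableSet D := by
    have h1 : MeasurableSet {x : E | ContinuousAt F x} :=
      (IsGδ.setOf_continuousAt F).measurableSet
    have : D = {x : E | ContinuousAt F x}ᶜ := by
      ext x; simp [hDdef]
    rw [this]; exact h1.compl
  set B : ℝ → Set E := fun t => {x | ∃ a b, dist x a < t ∧ dist x b < t ∧ κ < |h a - h b|}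
    with hBdef
  have hBopen : ∀ t, IsOpen (B t) := by
    intro t
    rw [Metric.isOpen_iff]
    rintro x ⟨a, b, ha, hb, hab⟩
    refine ⟨min (t - dist x a) (t - dist x b), by simp [ha, hb], ?_⟩
    intro x' hx'
    rw [Metric.mem_ball] at hx'
    have h1 := min_le_left (t - dist x a) (t - dist x b)
    have h2 := min_le_right (t - dist x a) (t - dist x b)
    refine ⟨a, b, ?_, ?_, hab⟩
    · have := dist_triangle x' x a
      linarith
    · have := dist_triangle x' x b
      linarith
  have hBmono : ∀ t t', t ≤ t' → B t ⊆ B t' := by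
    rintro t t' htt x ⟨a, b, ha, hb, hab⟩
    exact ⟨a, b, lt_of_lt_of_le ha htt, lt_of_lt_of_le hb htt, hab⟩
  have hBD : ∀ x, (∀ n : ℕ, x ∈ B (1 / (n + 1))) → x ∈ D := by
    intro x hx
    simp only [hDdef, Set.mem_setOf_eq]
    intro hc
    have hch : ContinuousAt h x := (g.continuous.continuousAt).comp hc
    rw [Metric.continuousAt_iff] at hch
    obtain ⟨δ, hδpos, hδ⟩ := hch (κ / 2) (by positivity)
    obtain ⟨n, hn⟩ := exists_nat_one_div_lt hδpos
    obtain ⟨a, b, ha, hb, hab⟩ := hx n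
    have h1 : dist (h a) (h x) < κ / 2 := hδ (by rw [dist_comm]; linarith)
    have h2 : dist (h b) (h x) < κ / 2 := hδ (by rw [dist_comm]; linarith)
    rw [Real.dist_eq] at h1 h2
    have : |h a - h b| ≤ |h a - h x| + |h b - h x| := by
      have := abs_sub_abs_le_abs_sub (h a - h x) (h b - h x)
      calc |h a - h b| = |(h a - h x) - (h b - h x)| := by ring_nf
        _ ≤ |h a - h x| + |h b - h x| := abs_sub _ _
    linarith
  have htend : Tendsto (fun n : ℕ => μ (B (1 / (n + 1)) \ D)) atTop (𝓝 0) := by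
    have hempty : (⋂ n : ℕ, (B (1 / (n + 1)) \ D)) = ∅ := by
      ext x
      simp only [Set.mem_iInter, Set.mem_diff, Set.mem_empty_iff_false, iff_false, not_forall]
      by_contra hc
      push_neg at hc
      exact (hc 0).2 (hBD x fun n => (hc n).1)
    have h1 := tendsto_measure_iInter_atTop (μ := μ)
      (s := fun n : ℕ => B (1 / (n + 1)) \ D)
      (fun n => ((hBopen _).measurableSet.diff hDmeas).nullMeasurableSet)
      (fun n m hnm => Set.diff_subset_diff_left (hBmono _ _ (by
        have h2 : (n : ℝ) + 1 ≤ (m : ℝ) + 1 := by exact_mod_cast Nat.succ_le_succ hnm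
        exact one_div_le_one_div_of_le (by positivity) h2)))
      ⟨0, measure_ne_top _ _⟩
    rwa [hempty, measure_empty] at h1
  obtain ⟨m, hm⟩ : ∃ m : ℕ, μ (B (1 / (m + 1)) \ D) < ENNReal.ofReal δ₀ :=
    (htend.eventually (gt_mem_nhds (ENNReal.ofReal_pos.2 hδ₀pos))).exists
  set r : ℝ := 1 / (m + 1) / 2 with hrdef
  have hrpos : 0 < r := by positivity
  set U := B (1 / (m + 1)) with hUdef
  set G := B r with hGdef
  have hGU : G ⊆ U := hBmono _ _ (by rw [hrdef]; linarith [one_div_pos.2 (by positivity : (0:ℝ) < (m:ℝ) + 1)])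
  have hYU : ∀ θ, P (Y θ ⁻¹' U) < ENNReal.ofReal ε₁ := by
    intro θ
    have h1 := hδ₀ (U \ D) ((hBopen _).measurableSet.diff hDmeas) hm θ
    have h2 : Y θ ⁻¹' U ⊆ Y θ ⁻¹' (U \ D) ∪ Y θ ⁻¹' D := by
      intro ω hω
      by_cases hD : Y θ ω ∈ D
      · exact Or.inr hD
      · exact Or.inl ⟨hω, hD⟩
    calc P (Y θ ⁻¹' U) ≤ P (Y θ ⁻¹' (U \ D)) + P (Y θ ⁻¹' D) :=
          (measure_mono h2).trans (measure_union_le _ _)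
      _ = P (Y θ ⁻¹' (U \ D)) := by rw [hcont θ, add_zero]
      _ < ENNReal.ofReal ε₁ := h1
  have hYUr : ∀ θ, (P (Y θ ⁻¹' U)).toReal < ε₁ := by
    intro θ
    have h1 := (ENNReal.toReal_lt_toReal (measure_ne_top P _) ENNReal.ofReal_ne_top).2 (hYU θ)
    rwa [ENNReal.toReal_ofReal hε₁pos.le] at h1
  have hGc : Gᶜ.Nonempty := by
    by_contra hc
    rw [Set.not_nonempty_iff_eq_empty, Set.compl_empty_iff] at hc
    have hUuniv : U = Set.univ := Set.eq_univ_of_subset hGU (hc ▸ rfl)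
    have h1 := hYUr θ₀
    rw [hUuniv] at h1
    simp only [Set.preimage_univ, measure_univ, ENNReal.toReal_one] at h1
    linarith
  have hosc : ∀ x ∈ Gᶜ, ∀ y, dist x y < r → |h y - h x| ≤ κ := by
    intro x hx y hd
    by_contra hc
    push_neg at hc
    exact hx ⟨y, x, hd, by simpa using hrpos, hc⟩
  obtain ⟨ψ, hψb, hψh⟩ := mcshane_approx h M κ r hhb hrpos hκpos.le Gᶜ hGc hosc
  have hGmeas : MeasurableSet G := (hBopen r).measurableSet
  have hUmeas : MeasurableSet U := (hBopen _).measurableSet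
  -- Step: X-measure of G is eventually uniformly small
  have key : ∃ N₁, ∀ n ≥ N₁, ∀ θ, (P (X n θ ⁻¹' G)).toReal ≤ 2 * ε₁ := by
    rcases Set.eq_empty_or_nonempty G with hGe | hGne
    · exact ⟨0, fun n _ θ => by rw [hGe]; simp; positivity⟩
    set χf : E → ℝ := fun x => max 0 (1 - (4 / r) * Metric.infDist x G) with hχdef
    have hχc : Continuous χf :=
      continuous_const.max (continuous_const.sub
        (continuous_const.mul (Metric.continuous_infDist_pt G)))
    have hχ01 : ∀ x, 0 ≤ χf x ∧ χf x ≤ 1 := by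
      intro x
      refine ⟨le_max_left _ _, max_le (by norm_num) ?_⟩
      have h1 : 0 ≤ Metric.infDist x G := Metric.infDist_nonneg
      have h2 : 0 ≤ 4 / r := by positivity
      nlinarith
    set χ := BoundedContinuousFunction.ofNormedAddCommGroup χf hχc 1
      (fun x => by rw [Real.norm_eq_abs, abs_le]; exact ⟨by linarith [(hχ01 x).1], (hχ01 x).2⟩)
      with hχBdef
    have hχeq : ∀ x, χ x = χf x := fun x => rfl
    have hχ01' : ∀ x, 0 ≤ χ x ∧ χ x ≤ 1 := fun x => (hχeq x) ▸ hχ01 x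
    have hχG : ∀ x ∈ G, χ x = 1 := by
      intro x hx
      rw [hχeq, hχdef]
      simp [Metric.infDist_zero_of_mem hx]
    have hχU : ∀ x, x ∉ U → χ x = 0 := by
      intro x hxU
      have h1 : ¬ Metric.infDist x G < r / 4 := by
        intro hlt
        obtain ⟨y, hyG, hxy⟩ := (Metric.infDist_lt_iff hGne).1 hlt
        obtain ⟨a, b, ha, hb, hab⟩ := hyG
        refine hxU ⟨a, b, ?_, ?_, hab⟩
        · have := dist_triangle x y a
          rw [hrdef] at *; linarith
        · have := dist_triangle x y b
          rw [hrdef] at *; linarith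
      push_neg at h1
      rw [hχeq, hχdef]
      have h2 : (4 / r) * (r / 4) ≤ (4 / r) * Metric.infDist x G :=
        mul_le_mul_of_nonneg_left h1 (by positivity)
      have h3 : (4 / r) * (r / 4) = 1 := by field_simp
      simp only [max_eq_left_iff]
      linarith
    obtain ⟨N₁, hN₁⟩ := hweak χ ε₁ hε₁pos
    refine ⟨N₁, fun n hn θ => ?_⟩
    have hXint : Integrable (fun ω => χ (X n θ ω)) P :=
      integrable_bdd P _ (hχc.measurable.comp (hXmeas n θ)) 1
        (fun ω => abs_le.2 ⟨by linarith [(hχ01' (X n θ ω)).1], (hχ01' (X n θ ω)).2⟩)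
    have hYint : Integrable (fun ω => χ (Y θ ω)) P :=
      integrable_bdd P _ (hχc.measurable.comp (hYmeas θ)) 1
        (fun ω => abs_le.2 ⟨by linarith [(hχ01' (Y θ ω)).1], (hχ01' (Y θ ω)).2⟩)
    have h2 : (P (X n θ ⁻¹' G)).toReal ≤ ∫ ω, χ (X n θ ω) ∂P := by
      have heq : (P (X n θ ⁻¹' G)).toReal
          = ∫ ω, (X n θ ⁻¹' G).indicator (fun _ => (1:ℝ)) ω ∂P := by
        rw [integral_indicator_const _ (hXmeas n θ hGmeas)]; simp [Measure.real]
      rw [heq]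
      refine integral_mono ((integrable_const (1:ℝ)).indicator (hXmeas n θ hGmeas)) hXint ?_
      intro ω
      by_cases hω : ω ∈ X n θ ⁻¹' G
      · rw [Set.indicator_of_mem hω]
        exact le_of_eq (hχG _ (Set.mem_preimage.1 hω)).symm
      · rw [Set.indicator_of_notMem hω]
        exact (hχ01' (X n θ ω)).1
    have h3 : ∫ ω, χ (Y θ ω) ∂P ≤ (P (Y θ ⁻¹' U)).toReal := by
      have heq : (P (Y θ ⁻¹' U)).toReal
          = ∫ ω, (Y θ ⁻¹' U).indicator (fun _ => (1:ℝ)) ω ∂P := by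
        rw [integral_indicator_const _ (hYmeas θ hUmeas)]; simp [Measure.real]
      rw [heq]
      refine integral_mono hYint ((integrable_const (1:ℝ)).indicator (hYmeas θ hUmeas)) ?_
      intro ω
      by_cases hω : ω ∈ Y θ ⁻¹' U
      · rw [Set.indicator_of_mem hω]
        exact (hχ01' (Y θ ω)).2
      · rw [Set.indicator_of_notMem hω]
        exact le_of_eq (hχU _ (fun hc => hω (Set.mem_preimage.2 hc)))
    have h4 := (abs_lt.1 (hN₁ n hn θ)).2
    have h5 := hYUr θ
    linarith
  obtain ⟨N₁, hN₁⟩ := key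
  obtain ⟨N₂, hN₂⟩ := hweak ψ ε₁ hε₁pos
  refine ⟨max N₁ N₂, fun n hn θ => ?_⟩
  have hψmeas : Measurable (⇑ψ) := ψ.continuous.measurable
  have hint_hX : Integrable (fun ω => h (X n θ ω)) P :=
    integrable_bdd P _ (hhmeas.comp (hXmeas n θ)) M (fun ω => hhb _)
  have hint_hY : Integrable (fun ω => h (Y θ ω)) P :=
    integrable_bdd P _ (hhmeas.comp (hYmeas θ)) M (fun ω => hhb _)
  have hint_ψX : Integrable (fun ω => ψ (X n θ ω)) P :=
    integrable_bdd P _ (hψmeas.comp (hXmeas n θ)) M (fun ω => hψb _)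
  have hint_ψY : Integrable (fun ω => ψ (Y θ ω)) P :=
    integrable_bdd P _ (hψmeas.comp (hYmeas θ)) M (fun ω => hψb _)
  have hpt : ∀ (Z : Ω → E) (ω : Ω),
      |h (Z ω) - ψ (Z ω)| ≤ κ + (Z ⁻¹' G).indicator (fun _ => 2 * M) ω := by
    intro Z ω
    by_cases hω : ω ∈ Z ⁻¹' G
    · rw [Set.indicator_of_mem hω]
      have h1 := abs_sub (h (Z ω)) (ψ (Z ω))
      have h2 := hhb (Z ω)
      have h3 := hψb (Z ω)
      have := abs_sub_abs_le_abs_sub (h (Z ω)) (ψ (Z ω))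
      calc |h (Z ω) - ψ (Z ω)| ≤ |h (Z ω)| + |ψ (Z ω)| := abs_sub _ _
        _ ≤ κ + 2 * M := by linarith
    · rw [Set.indicator_of_notMem hω, add_zero]
      have := hψh (Z ω) (fun hc => hω (Set.mem_preimage.2 hc))
      rw [abs_sub_comm]
      exact this
  have e1 : |∫ ω, h (X n θ ω) ∂P - ∫ ω, ψ (X n θ ω) ∂P|
      ≤ κ + (P (X n θ ⁻¹' G)).toReal * (2 * M) :=
    int_diff_le P _ _ hint_hX hint_ψX _ (hXmeas n θ hGmeas) κ (2 * M) (hpt (X n θ))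
  have e3 : |∫ ω, ψ (Y θ ω) ∂P - ∫ ω, h (Y θ ω) ∂P|
      ≤ κ + (P (Y θ ⁻¹' G)).toReal * (2 * M) := by
    have := int_diff_le P _ _ hint_hY hint_ψY _ (hYmeas θ hGmeas) κ (2 * M) (hpt (Y θ))
    rwa [abs_sub_comm]
  have e2 : |∫ ω, ψ (X n θ ω) ∂P - ∫ ω, ψ (Y θ ω) ∂P| < ε₁ :=
    hN₂ n (le_trans (le_max_right _ _) hn) θ
  have hPX : (P (X n θ ⁻¹' G)).toReal ≤ 2 * ε₁ := hN₁ n (le_trans (le_max_left _ _) hn) θ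
  have hPY : (P (Y θ ⁻¹' G)).toReal ≤ ε₁ :=
    le_trans (ENNReal.toReal_mono (measure_ne_top P _)
      (measure_mono (Set.preimage_mono hGU))) (hYUr θ).le
  have hPX0 : 0 ≤ (P (X n θ ⁻¹' G)).toReal := ENNReal.toReal_nonneg
  have hPY0 : 0 ≤ (P (Y θ ⁻¹' G)).toReal := ENNReal.toReal_nonneg
  have hPX2 : (P (X n θ ⁻¹' G)).toReal * (2 * M) ≤ (2 * ε₁) * (2 * M) :=
    mul_le_mul_of_nonneg_right hPX (by positivity)
  have hPY2 : (P (Y θ ⁻¹' G)).toReal * (2 * M) ≤ ε₁ * (2 * M) :=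
    mul_le_mul_of_nonneg_right hPY (by positivity)
  have tri : |∫ ω, g (F (X n θ ω)) ∂P - ∫ ω, g (F (Y θ ω)) ∂P|
      ≤ |∫ ω, h (X n θ ω) ∂P - ∫ ω, ψ (X n θ ω) ∂P|
        + |∫ ω, ψ (X n θ ω) ∂P - ∫ ω, ψ (Y θ ω) ∂P|
        + |∫ ω, ψ (Y θ ω) ∂P - ∫ ω, h (Y θ ω) ∂P| := by
    have habc := abs_sub_le (∫ ω, h (X n θ ω) ∂P) (∫ ω, ψ (X n θ ω) ∂P) (∫ ω, h (Y θ ω) ∂P)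
    have hbcd := abs_sub_le (∫ ω, ψ (X n θ ω) ∂P) (∫ ω, ψ (Y θ ω) ∂P) (∫ ω, h (Y θ ω) ∂P)
    have hgoal : |∫ ω, g (F (X n θ ω)) ∂P - ∫ ω, g (F (Y θ ω)) ∂P|
        = |∫ ω, h (X n θ ω) ∂P - ∫ ω, h (Y θ ω) ∂P| := rfl
    rw [hgoal]
    linarith
  have hεbound : ε₁ * (16 * (M + 1)) ≤ ε := by
    rw [← le_div_iff₀ (by positivity : (0:ℝ) < 16 * (M + 1))]
    exact hε₁le
  have := tri
  nlinarith [hε₁pos, hM0, hε]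
end

section
/- Let (μ_n^θ)_{n≥1,θ∈Θ} and (μ^θ)_{θ∈Θ} be Borel probability measures on ℝ₊^d. Suppose that for every z ∈ ℝ₊^d, sup_θ |∫ e^{−⟨z,x⟩} dμ_n^θ(x) − ∫ e^{−⟨z,x⟩} dμ^θ(x)| → 0 as n → ∞, and for each ε>0 there exists R>0 with sup_θ μ^θ({|x| > R}) < ε. Then μ_n^θ converges weakly to μ^θ uniformly on Θ, i.e. sup_θ |∫ f dμ_n^θ − ∫ f dμ^θ| → 0 for every bounded continuous f: ℝ^d → ℝ. -/
open MeasureTheory Filter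

namespace Stmt5Aux

variable {d : ℕ}

noncomputable def expm (d : ℕ) (m : Fin d → ℝ) : (Fin d → ℝ) → ℝ :=
  fun x => Real.exp (-(∑ k, m k * max (x k) 0))

lemma expm_cont (m : Fin d → ℝ) : Continuous (expm d m) := by
  apply Real.continuous_exp.comp
  exact (continuous_finset_sum _ fun k _ =>
    (continuous_const.mul ((continuous_apply k).max continuous_const))).neg

lemma expm_pos (m : Fin d → ℝ) (x : Fin d → ℝ) : 0 < expm d m x := Real.exp_pos _

lemma expm_le_one {m : Fin d → ℝ} (hm : ∀ k, 0 ≤ m k) (x : Fin d → ℝ) : expm d m x ≤ 1 := by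
  rw [expm, Real.exp_le_one_iff, neg_nonpos]
  exact Finset.sum_nonneg fun k _ => mul_nonneg (hm k) (le_max_right _ _)

lemma expm_mul (m m' : Fin d → ℝ) :
    expm d m * expm d m' = expm d (m + m') := by
  funext x
  simp only [Pi.mul_apply, expm, ← Real.exp_add, Pi.add_apply]
  rw [← neg_add, ← Finset.sum_add_distrib]
  congr 2
  exact Finset.sum_congr rfl fun k _ => by ring

def ESet (d : ℕ) : Set ((Fin d → ℝ) → ℝ) :=
  {g | ∃ m : Fin d → ℝ, (∀ k, 0 ≤ m k) ∧ g = expm d m}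

def S (d : ℕ) : Submodule ℝ ((Fin d → ℝ) → ℝ) := Submodule.span ℝ (ESet d)

lemma S_mul_mem {a b : (Fin d → ℝ) → ℝ} (ha : a ∈ S d) (hb : b ∈ S d) : a * b ∈ S d := by
  induction ha using Submodule.span_induction with
  | mem a hmem =>
    induction hb using Submodule.span_induction with
    | mem b hmem' =>
      obtain ⟨m, hm, rfl⟩ := hmem
      obtain ⟨m', hm', rfl⟩ := hmem'
      exact Submodule.subset_span
        ⟨m + m', fun k => add_nonneg (hm k) (hm' k), expm_mul m m'⟩
    | zero => simp only [mul_zero]; exact Submodule.zero_mem (S d)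
    | add y z _ _ hy hz => rw [mul_add]; exact Submodule.add_mem _ hy hz
    | smul c y _ hy => rw [mul_smul_comm]; exact Submodule.smul_mem _ _ hy
  | zero => simp only [zero_mul]; exact Submodule.zero_mem (S d)
  | add y z _ _ hy hz => rw [add_mul]; exact Submodule.add_mem _ hy hz
  | smul c y _ hy => rw [smul_mul_assoc]; exact Submodule.smul_mem _ _ hy

lemma ae_orthant {κ : Measure (Fin d → ℝ)} (h : κ {x | ∃ k, x k < 0} = 0) :
    ∀ᵐ x ∂κ, ∀ k, 0 ≤ x k := by
  rw [ae_iff]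
  convert h using 2
  ext x
  simp [not_forall, not_le]

lemma expm_integrable {κ : Measure (Fin d → ℝ)} [IsProbabilityMeasure κ]
    {m : Fin d → ℝ} (hm : ∀ k, 0 ≤ m k) : Integrable (expm d m) κ := by
  refine (integrable_const (1:ℝ)).mono' (expm_cont m).aestronglyMeasurable ?_
  refine ae_of_all _ fun x => ?_
  rw [Real.norm_eq_abs, abs_of_pos (expm_pos m x)]
  exact expm_le_one hm x

lemma expm_integral_eq {κ : Measure (Fin d → ℝ)}
    (h : κ {x | ∃ k, x k < 0} = 0) (m : Fin d → ℝ) :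
    ∫ x, expm d m x ∂κ = ∫ x, Real.exp (-(∑ k, m k * x k)) ∂κ := by
  refine integral_congr_ae ?_
  filter_upwards [ae_orthant h] with x hx
  simp only [expm]
  congr 2
  exact Finset.sum_congr rfl fun k _ => by rw [max_eq_left (hx k)]

end Stmt5Aux

namespace Stmt5Aux

lemma conv_of_mem_S {d : ℕ} {Θ : Type*}
    (μ : ℕ → Θ → Measure (Fin d → ℝ)) (ν : Θ → Measure (Fin d → ℝ))
    (hμ : ∀ n θ, IsProbabilityMeasure (μ n θ)) (hν : ∀ θ, IsProbabilityMeasure (ν θ))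
    (hμsupp : ∀ n θ, (μ n θ) {x | ∃ k, x k < 0} = 0)
    (hνsupp : ∀ θ, (ν θ) {x | ∃ k, x k < 0} = 0)
    (hLaplace : ∀ z : Fin d → ℝ, (∀ k, 0 ≤ z k) →
      ∀ ε > (0 : ℝ), ∃ N, ∀ n ≥ N, ∀ θ,
        |∫ x, Real.exp (-(∑ k, z k * x k)) ∂(μ n θ)
          - ∫ x, Real.exp (-(∑ k, z k * x k)) ∂(ν θ)| < ε)
    {g : (Fin d → ℝ) → ℝ} (hg : g ∈ S d) :
    (∀ n θ, Integrable g (μ n θ)) ∧ (∀ θ, Integrable g (ν θ)) ∧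
      ∀ ε > (0 : ℝ), ∃ N, ∀ n ≥ N, ∀ θ,
        |∫ x, g x ∂(μ n θ) - ∫ x, g x ∂(ν θ)| < ε := by
  induction hg using Submodule.span_induction with
  | mem a hmem =>
    obtain ⟨m, hm, rfl⟩ := hmem
    refine ⟨fun n θ => haveI := hμ n θ; expm_integrable hm,
      fun θ => haveI := hν θ; expm_integrable hm, fun ε hε => ?_⟩
    obtain ⟨N, hN⟩ := hLaplace m hm ε hε
    refine ⟨N, fun n hn θ => ?_⟩
    rw [expm_integral_eq (hμsupp n θ) m, expm_integral_eq (hνsupp θ) m]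
    exact hN n hn θ
  | zero =>
    exact ⟨fun _ _ => integrable_zero _ _ _, fun _ => integrable_zero _ _ _,
      fun ε hε => ⟨0, fun n _ θ => by simpa using hε⟩⟩
  | add a b ha hb iha ihb =>
    obtain ⟨ia, ia', ca⟩ := iha
    obtain ⟨ib, ib', cb⟩ := ihb
    refine ⟨fun n θ => (ia n θ).add (ib n θ), fun θ => (ia' θ).add (ib' θ), fun ε hε => ?_⟩
    obtain ⟨N₁, h₁⟩ := ca (ε/2) (by linarith)
    obtain ⟨N₂, h₂⟩ := cb (ε/2) (by linarith)
    refine ⟨max N₁ N₂, fun n hn θ => ?_⟩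
    have e1 : ∫ x, (a + b) x ∂(μ n θ) = ∫ x, a x ∂(μ n θ) + ∫ x, b x ∂(μ n θ) :=
      integral_add (ia n θ) (ib n θ)
    have e2 : ∫ x, (a + b) x ∂(ν θ) = ∫ x, a x ∂(ν θ) + ∫ x, b x ∂(ν θ) :=
      integral_add (ia' θ) (ib' θ)
    rw [e1, e2]
    have := h₁ n (le_trans (le_max_left _ _) hn) θ
    have := h₂ n (le_trans (le_max_right _ _) hn) θ
    calc |∫ x, a x ∂(μ n θ) + ∫ x, b x ∂(μ n θ) - (∫ x, a x ∂(ν θ) + ∫ x, b x ∂(ν θ))|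
        ≤ |∫ x, a x ∂(μ n θ) - ∫ x, a x ∂(ν θ)| + |∫ x, b x ∂(μ n θ) - ∫ x, b x ∂(ν θ)| := by
          apply (abs_add_le _ _).trans_eq' ; ring_nf
      _ < ε := by linarith
  | smul c a ha iha =>
    obtain ⟨ia, ia', ca⟩ := iha
    refine ⟨fun n θ => (ia n θ).smul c, fun θ => (ia' θ).smul c, fun ε hε => ?_⟩
    obtain ⟨N, hN⟩ := ca (ε/(|c|+1)) (by positivity)
    refine ⟨N, fun n hn θ => ?_⟩
    have e1 : ∫ x, (c • a) x ∂(μ n θ) = c * ∫ x, a x ∂(μ n θ) := by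
      simpa using integral_smul c a (μ := μ n θ)
    have e2 : ∫ x, (c • a) x ∂(ν θ) = c * ∫ x, a x ∂(ν θ) := by
      simpa using integral_smul c a (μ := ν θ)
    rw [e1, e2, ← mul_sub, abs_mul]
    have h := hN n hn θ
    calc |c| * |∫ x, a x ∂(μ n θ) - ∫ x, a x ∂(ν θ)|
        ≤ |c| * (ε/(|c|+1)) := mul_le_mul_of_nonneg_left h.le (abs_nonneg c)
      _ < ε := by
          rw [mul_div_assoc', div_lt_iff₀ (by positivity)]
          have : 0 ≤ |c| := abs_nonneg c
          nlinarith

def cube (d : ℕ) : Set (Fin d → ℝ) := Set.Icc 0 1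

noncomputable def Tmap (d : ℕ) (x : Fin d → ℝ) : cube d :=
  ⟨fun k => Real.exp (-(max (x k) 0)), by
    constructor
    · intro k
      exact (Real.exp_pos _).le
    · intro k
      rw [Pi.one_apply, Real.exp_le_one_iff, neg_nonpos]
      exact le_max_right _ _⟩

def coordFn (d : ℕ) (k : Fin d) : C(cube d, ℝ) :=
  ⟨fun y => (y : Fin d → ℝ) k, (continuous_apply k).comp continuous_subtype_val⟩

lemma comp_mem_S {p : C(cube d, ℝ)}
    (hp : p ∈ Algebra.adjoin ℝ (Set.range (coordFn d))) :
    (fun x => p (Tmap d x)) ∈ S d := by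
  induction hp using Algebra.adjoin_induction with
  | mem q hq =>
    obtain ⟨k, rfl⟩ := hq
    refine Submodule.subset_span ⟨Pi.single k 1, fun j => ?_, ?_⟩
    · by_cases h : j = k <;> simp [Pi.single_apply, h]
    · funext x
      simp only [coordFn, ContinuousMap.coe_mk, Tmap, expm]
      congr 2
      rw [Finset.sum_eq_single k]
      · simp
      · intro j _ hj
        simp [Pi.single_apply, hj]
      · simp
  | algebraMap r =>
    have : (fun x => (algebraMap ℝ C(cube d, ℝ) r) (Tmap d x)) = r • expm d 0 := by
      funext x
      simp [expm, Algebra.algebraMap_eq_smul_one]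
    rw [this]
    exact Submodule.smul_mem _ _ (Submodule.subset_span ⟨0, fun k => le_refl 0, rfl⟩)
  | add q q' hq hq' ihq ihq' =>
    have : (fun x => (q + q') (Tmap d x))
        = (fun x => q (Tmap d x)) + (fun x => q' (Tmap d x)) := rfl
    rw [this]; exact Submodule.add_mem _ ihq ihq'
  | mul q q' hq hq' ihq ihq' =>
    have : (fun x => (q * q') (Tmap d x))
        = (fun x => q (Tmap d x)) * (fun x => q' (Tmap d x)) := rfl
    rw [this]; exact S_mul_mem ihq ihq'

instance : CompactSpace (cube d) := by
  unfold cube; infer_instance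

lemma coord_separates : (Algebra.adjoin ℝ (Set.range (coordFn d))).SeparatesPoints := by
  intro y y' hne
  have : ∃ k, (y : Fin d → ℝ) k ≠ (y' : Fin d → ℝ) k := by
    by_contra h
    push_neg at h
    exact hne (Subtype.ext (funext h))
  obtain ⟨k, hk⟩ := this
  exact ⟨coordFn d k, ⟨coordFn d k, Algebra.subset_adjoin ⟨k, rfl⟩, rfl⟩, hk⟩

end Stmt5Aux

set_option maxHeartbeats 1000000

open Stmt5Aux

/-- Uniform continuity theorem for Laplace transforms on the nonnegative orthant:
uniform convergence of Laplace transforms plus uniform tightness of the limit family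
implies uniform weak convergence. -/
theorem stmt5
    {d : ℕ} {Θ : Type*}
    (μ : ℕ → Θ → Measure (Fin d → ℝ)) (ν : Θ → Measure (Fin d → ℝ))
    (hμ : ∀ n θ, IsProbabilityMeasure (μ n θ)) (hν : ∀ θ, IsProbabilityMeasure (ν θ))
    (hμsupp : ∀ n θ, (μ n θ) {x | ∃ k, x k < 0} = 0)
    (hνsupp : ∀ θ, (ν θ) {x | ∃ k, x k < 0} = 0)
    (hLaplace : ∀ z : Fin d → ℝ, (∀ k, 0 ≤ z k) →
      ∀ ε > (0 : ℝ), ∃ N, ∀ n ≥ N, ∀ θ,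
        |∫ x, Real.exp (-(∑ k, z k * x k)) ∂(μ n θ)
          - ∫ x, Real.exp (-(∑ k, z k * x k)) ∂(ν θ)| < ε)
    (htight : ∀ ε > (0 : ℝ), ∃ R : ℝ, ∀ θ,
      (ν θ) {x | ‖x‖ > R} < ENNReal.ofReal ε) :
    ∀ f : BoundedContinuousFunction (Fin d → ℝ) ℝ, ∀ ε > (0 : ℝ), ∃ N, ∀ n ≥ N, ∀ θ,
      |∫ x, f x ∂(μ n θ) - ∫ x, f x ∂(ν θ)| < ε := by
  intro f ε hε
  classical
  set M : ℝ := ‖f‖ with hMdef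
  have hM : 0 ≤ M := norm_nonneg f
  have hfb : ∀ y, |f y| ≤ M := fun y => by
    simpa [Real.norm_eq_abs] using f.norm_coe_le_norm y
  set δ : ℝ := min (ε / (15 * M + 15)) (1/2) with hδdef
  have hδpos : 0 < δ := lt_min (by positivity) (by norm_num)
  have hδhalf : δ ≤ 1/2 := min_le_right _ _
  have hδε : (14 * M + 3) * δ < ε := by
    have h1 : δ ≤ ε / (15*M+15) := min_le_left _ _
    have h2 : δ * (15*M+15) ≤ ε := (le_div_iff₀ (by positivity)).mp h1
    nlinarith
  -- tightness radius
  obtain ⟨R₀, hR₀⟩ := htight δ hδpos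
  set R : ℝ := max R₀ 1 with hRdef
  have hR1 : (1:ℝ) ≤ R := le_max_right _ _
  have hνR : ∀ θ, (ν θ) {x | ‖x‖ > R} < ENNReal.ofReal δ := fun θ =>
    lt_of_le_of_lt (measure_mono fun x hx => lt_of_le_of_lt (le_max_left R₀ 1) hx) (hR₀ θ)
  -- small Laplace parameter
  set t : ℝ := δ / (d * R + 1) with htdef
  have hdR : (0:ℝ) ≤ d * R := mul_nonneg (Nat.cast_nonneg d) (by linarith)
  have ht : 0 < t := div_pos hδpos (by linarith)
  have htdR : t * (d * R) ≤ δ := by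
    rw [htdef, div_mul_eq_mul_div, div_le_iff₀ (by linarith)]
    nlinarith
  have htnn : ∀ k : Fin d, 0 ≤ (fun _ : Fin d => t) k := fun _ => ht.le
  -- lower bound on the Laplace transform of ν at t
  have hgt_lb : ∀ θ, 1 - 2*δ ≤ ∫ x, expm d (fun _ => t) x ∂(ν θ) := by
    intro θ
    haveI := hν θ
    set B : Set (Fin d → ℝ) := {x | ‖x‖ ≤ R} with hB
    have hBmeas : MeasurableSet B :=
      (isClosed_le continuous_norm continuous_const).measurableSet
    have hconst : ∀ x ∈ B, Real.exp (-(t*(d*R))) ≤ expm d (fun _ => t) x := by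
      intro x hx
      have hxR : ‖x‖ ≤ R := hx
      apply Real.exp_le_exp.2
      rw [neg_le_neg_iff]
      calc ∑ k, t * max (x k) 0
          ≤ ∑ _k : Fin d, t * R := by
            refine Finset.sum_le_sum fun k _ => mul_le_mul_of_nonneg_left ?_ ht.le
            refine max_le ?_ (by linarith)
            exact le_trans (le_abs_self _)
              (le_trans (by simpa [Real.norm_eq_abs] using norm_le_pi_norm x k) hxR)
        _ = t * (d * R) := by
            rw [Finset.sum_const, Finset.card_univ, Fintype.card_fin, nsmul_eq_mul]; ring
    have h1 : Real.exp (-(t*(d*R))) * ((ν θ) B).toReal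
        ≤ ∫ x in B, expm d (fun _ => t) x ∂(ν θ) :=
      setIntegral_ge_of_const_le_real (μ := ν θ) hBmeas (measure_ne_top _ _) hconst
        (expm_integrable htnn).integrableOn
    have h2 : ∫ x in B, expm d (fun _ => t) x ∂(ν θ) ≤ ∫ x, expm d (fun _ => t) x ∂(ν θ) :=
      setIntegral_le_integral (expm_integrable htnn)
        (ae_of_all _ fun x => (expm_pos _ _).le)
    have hcompl : ((ν θ) Bᶜ).toReal < δ := by
      refine ENNReal.toReal_lt_of_lt_ofReal ?_
      have hBc : Bᶜ = {x | ‖x‖ > R} := by ext x; simp [hB, not_le]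
      rw [hBc]; exact hνR θ
    have hcompl0 : 0 ≤ ((ν θ) Bᶜ).toReal := ENNReal.toReal_nonneg
    have hsum : ((ν θ) B).toReal + ((ν θ) Bᶜ).toReal = 1 := by
      rw [← ENNReal.toReal_add (measure_ne_top _ _) (measure_ne_top _ _),
        measure_add_measure_compl hBmeas, measure_univ, ENNReal.toReal_one]
    have hexp : 1 - δ ≤ Real.exp (-(t*(d*R))) := by
      have := Real.add_one_le_exp (-(t*(d*R)))
      linarith
    have hBnn : 0 ≤ ((ν θ) B).toReal := ENNReal.toReal_nonneg
    nlinarith [h1, h2, hexp, hcompl, hsum, hBnn]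
  -- uniform Laplace convergence at t
  obtain ⟨N₀, hN₀⟩ := hLaplace (fun _ => t) htnn δ hδpos
  have hN₀' : ∀ n ≥ N₀, ∀ θ,
      |∫ x, expm d (fun _ => t) x ∂(μ n θ) - ∫ x, expm d (fun _ => t) x ∂(ν θ)| < δ := by
    intro n hn θ
    rw [expm_integral_eq (hμsupp n θ), expm_integral_eq (hνsupp θ)]
    exact hN₀ n hn θ
  -- truncation level
  set L : ℝ := max R (Real.log 2 / t) with hLdef
  have hRL : R ≤ L := le_max_left _ _
  have hL0 : (0:ℝ) < L := lt_of_lt_of_le (lt_of_lt_of_le one_pos hR1) hRL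
  have hexpL : Real.exp (-(t*L)) ≤ 1/2 := by
    have hlog : Real.log 2 ≤ t * L := by
      have h := le_max_right R (Real.log 2 / t)
      rw [div_le_iff₀ ht] at h
      linarith [mul_comm L t]
    calc Real.exp (-(t*L)) ≤ Real.exp (-(Real.log 2)) := Real.exp_le_exp.2 (by linarith)
      _ = 1/2 := by rw [Real.exp_neg, Real.exp_log two_pos]; norm_num
  set A : Set (Fin d → ℝ) := {x | ∃ k, L < x k} with hA
  have hAmeas : MeasurableSet A := by
    have : A = ⋃ k, (fun x : Fin d → ℝ => x k) ⁻¹' Set.Ioi L := by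
      ext x; simp [hA, Set.mem_iUnion]
    rw [this]
    exact MeasurableSet.iUnion fun k => (measurable_pi_apply k) measurableSet_Ioi
  -- uniform bound on μ n θ A for n ≥ N₀
  have hμA : ∀ n ≥ N₀, ∀ θ, ((μ n θ) A).toReal < 6*δ := by
    intro n hn θ
    haveI := hμ n θ
    have hgt_int : Integrable (expm d (fun _ => t)) (μ n θ) := expm_integrable htnn
    have hub : 1 - 3*δ < ∫ x, expm d (fun _ => t) x ∂(μ n θ) := by
      have h1 := hN₀' n hn θ
      have h2 := hgt_lb θ
      have h3 := abs_lt.1 h1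
      linarith [h3.1]
    have hconst : ∀ x ∈ A, 1 - Real.exp (-(t*L)) ≤ 1 - expm d (fun _ => t) x := by
      intro x hx
      obtain ⟨k, hk⟩ := hx
      have hsum : t * L ≤ ∑ j, t * max (x j) 0 := by
        have h1 : t * L ≤ t * max (x k) 0 :=
          mul_le_mul_of_nonneg_left (le_trans hk.le (le_max_left _ _)) ht.le
        exact h1.trans (Finset.single_le_sum
          (fun j _ => mul_nonneg ht.le (le_max_right _ _)) (Finset.mem_univ k))
      have : expm d (fun _ => t) x ≤ Real.exp (-(t*L)) :=
        Real.exp_le_exp.2 (by linarith)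
      linarith
    have h1 : (1 - Real.exp (-(t*L))) * ((μ n θ) A).toReal
        ≤ ∫ x in A, (1 - expm d (fun _ => t) x) ∂(μ n θ) :=
      setIntegral_ge_of_const_le_real hAmeas (measure_ne_top _ _) hconst
        ((integrable_const 1).sub hgt_int).integrableOn
    have h2 : ∫ x in A, (1 - expm d (fun _ => t) x) ∂(μ n θ)
        ≤ ∫ x, (1 - expm d (fun _ => t) x) ∂(μ n θ) :=
      setIntegral_le_integral ((integrable_const 1).sub hgt_int)
        (ae_of_all _ fun x => by simp [expm_le_one htnn x])
    have h3 : ∫ x, (1 - expm d (fun _ => t) x) ∂(μ n θ)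
        = 1 - ∫ x, expm d (fun _ => t) x ∂(μ n θ) := by
      rw [integral_sub (integrable_const 1) hgt_int, integral_const]
      simp
    have hfin : (1 - Real.exp (-(t*L))) * ((μ n θ) A).toReal < 3*δ := by
      rw [h3] at h2; linarith
    nlinarith [(ENNReal.toReal_nonneg : 0 ≤ ((μ n θ) A).toReal), hexpL, hfin]
  -- bound on ν θ A
  have hνA : ∀ θ, ((ν θ) A).toReal < δ := by
    intro θ
    haveI := hν θ
    have hsub : A ⊆ {x | ‖x‖ > R} := by
      rintro x ⟨k, hk⟩
      have h1 : R < x k := lt_of_le_of_lt hRL hk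
      exact h1.trans_le ((le_abs_self _).trans
        (by simpa [Real.norm_eq_abs] using norm_le_pi_norm x k))
    have := ENNReal.toReal_mono (measure_ne_top (ν θ) _) (measure_mono hsub)
    exact lt_of_le_of_lt this (ENNReal.toReal_lt_of_lt_ofReal (hνR θ))
  -- truncated function φ
  set φ : (Fin d → ℝ) → ℝ := fun x => f (fun k => min (max (x k) 0) L) with hφdef
  have hφcont : Continuous φ := f.continuous.comp
    (continuous_pi fun k => ((continuous_apply k).max continuous_const).min continuous_const)
  have hφb : ∀ x, |φ x| ≤ M := fun x => hfb _
  have hφint : ∀ (κ : Measure (Fin d → ℝ)) [IsProbabilityMeasure κ], Integrable φ κ := by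
    intro κ hκ
    refine (integrable_const M).mono' hφcont.aestronglyMeasurable
      (ae_of_all _ fun x => ?_)
    rw [Real.norm_eq_abs]; exact hφb x
  -- f vs φ
  have hfφ : ∀ (κ : Measure (Fin d → ℝ)), IsProbabilityMeasure κ →
      κ {x | ∃ k, x k < 0} = 0 →
      |∫ x, f x ∂κ - ∫ x, φ x ∂κ| ≤ 2*M*((κ A).toReal) := by
    intro κ hκ hsupp
    haveI := hκ
    have hint_f : Integrable f κ := f.integrable κ
    have hint_φ : Integrable φ κ := hφint κ
    have key : (fun x => |f x - φ x|) ≤ᵐ[κ] A.indicator (fun _ => 2*M) := by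
      filter_upwards [ae_orthant hsupp] with x hx
      by_cases hxA : x ∈ A
      · rw [Set.indicator_of_mem hxA]
        calc |f x - φ x| ≤ |f x| + |φ x| := abs_sub _ _
          _ ≤ 2*M := by linarith [hfb x, hφb x]
      · rw [Set.indicator_of_notMem hxA]
        have hxA' : ∀ k, x k ≤ L := by
          simp only [hA, Set.mem_setOf_eq, not_exists, not_lt] at hxA
          exact hxA
        have : φ x = f x := by
          have hxe : (fun k => min (max (x k) 0) L) = x := by
            funext k
            rw [max_eq_left (hx k), min_eq_left (hxA' k)]
          rw [hφdef]
          simp only [hxe]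
        rw [this, sub_self, abs_zero]
    have h1 : |∫ x, f x ∂κ - ∫ x, φ x ∂κ| = |∫ x, (f x - φ x) ∂κ| := by
      rw [integral_sub hint_f hint_φ]
    rw [h1]
    have h2 : |∫ x, (f x - φ x) ∂κ| ≤ ∫ x, |f x - φ x| ∂κ := by
      simpa [Real.norm_eq_abs] using norm_integral_le_integral_norm (fun x => f x - φ x) (μ := κ)
    have h3 : ∫ x, |f x - φ x| ∂κ ≤ ∫ x, A.indicator (fun _ => 2*M) x ∂κ :=
      integral_mono_ae (hint_f.sub hint_φ).abs
        ((integrable_const (2*M)).indicator hAmeas) key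
    have h4 : ∫ x, A.indicator (fun _ => 2*M) x ∂κ = (κ A).toReal * (2*M) := by
      rw [integral_indicator_const _ hAmeas, smul_eq_mul]; rfl
    linarith [h2.trans (h3.trans_eq h4)]
  -- Stone-Weierstrass approximation on the cube
  set η : ℝ := Real.exp (-L) with hηdef
  have hη : 0 < η := Real.exp_pos _
  have hcont_h : Continuous
      (fun y : cube d => f (fun k => -Real.log (max ((y : Fin d → ℝ) k) η))) := by
    apply f.continuous.comp
    apply continuous_pi
    intro k
    have hmax : Continuous fun y : cube d => max ((y : Fin d → ℝ) k) η :=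
      ((continuous_apply k).comp continuous_subtype_val).max continuous_const
    have hlog : Continuous fun y : cube d => Real.log (max ((y : Fin d → ℝ) k) η) :=
      Real.continuousOn_log.comp_continuous hmax
        (fun y => (lt_of_lt_of_le hη (le_max_right _ _)).ne')
    exact hlog.neg
  obtain ⟨p, hp⟩ := ContinuousMap.exists_mem_subalgebra_near_continuous_of_separatesPoints
    (Algebra.adjoin ℝ (Set.range (coordFn d))) coord_separates _ hcont_h δ hδpos
  set g : (Fin d → ℝ) → ℝ := fun x => (p : C(cube d, ℝ)) (Tmap d x) with hgdef
  have hgS : g ∈ S d := comp_mem_S p.2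
  have hgφ : ∀ x, |g x - φ x| ≤ δ := by
    intro x
    have hTφ : f (fun k => -Real.log (max ((Tmap d x : Fin d → ℝ) k) η)) = φ x := by
      congr 1
      funext k
      show -Real.log (max (Real.exp (-(max (x k) 0))) (Real.exp (-L))) = min (max (x k) 0) L
      rcases le_total (max (x k) 0) L with h | h
      · rw [max_eq_left (Real.exp_le_exp.2 (by linarith)), Real.log_exp, min_eq_left h]; ring
      · rw [max_eq_right (Real.exp_le_exp.2 (by linarith)), Real.log_exp, min_eq_right h]; ring
    have := hp (Tmap d x)
    rw [Real.norm_eq_abs, hTφ] at this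
    exact this.le
  have hφg : ∀ (κ : Measure (Fin d → ℝ)), IsProbabilityMeasure κ → Integrable g κ →
      |∫ x, φ x ∂κ - ∫ x, g x ∂κ| ≤ δ := by
    intro κ hκ hintg
    haveI := hκ
    have hintφ : Integrable φ κ := hφint κ
    rw [← integral_sub hintφ hintg]
    have h2 : |∫ x, (φ x - g x) ∂κ| ≤ ∫ x, |φ x - g x| ∂κ := by
      simpa [Real.norm_eq_abs] using norm_integral_le_integral_norm (fun x => φ x - g x) (μ := κ)
    have h3 : ∫ x, |φ x - g x| ∂κ ≤ ∫ x, δ ∂κ :=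
      integral_mono (hintφ.sub hintg).abs (integrable_const δ)
        (fun x => by rw [abs_sub_comm]; exact hgφ x)
    have h4 : ∫ x, δ ∂κ = δ := by simp
    linarith [h2.trans (h3.trans_eq h4)]
  obtain ⟨hgint_μ, hgint_ν, hgconv⟩ :=
    conv_of_mem_S μ ν hμ hν hμsupp hνsupp hLaplace hgS
  obtain ⟨N₁, hN₁⟩ := hgconv δ hδpos
  refine ⟨max N₀ N₁, fun n hn θ => ?_⟩
  haveI := hμ n θ
  haveI := hν θ
  have b1 := hfφ (μ n θ) (hμ n θ) (hμsupp n θ)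
  have b5 := hfφ (ν θ) (hν θ) (hνsupp θ)
  have b2 := hφg (μ n θ) (hμ n θ) (hgint_μ n θ)
  have b4 := hφg (ν θ) (hν θ) (hgint_ν θ)
  have b3 := hN₁ n (le_trans (le_max_right _ _) hn) θ
  have bμA := hμA n (le_trans (le_max_left _ _) hn) θ
  have bνA := hνA θ
  have b1' : |∫ x, f x ∂(μ n θ) - ∫ x, φ x ∂(μ n θ)| ≤ 2*M*(6*δ) := by
    refine b1.trans ?_
    have := mul_le_mul_of_nonneg_left bμA.le (by linarith : (0:ℝ) ≤ 2*M)
    linarith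
  have b5' : |∫ x, f x ∂(ν θ) - ∫ x, φ x ∂(ν θ)| ≤ 2*M*δ := by
    refine b5.trans ?_
    have := mul_le_mul_of_nonneg_left bνA.le (by linarith : (0:ℝ) ≤ 2*M)
    linarith
  have tri : |∫ x, f x ∂(μ n θ) - ∫ x, f x ∂(ν θ)|
      ≤ |∫ x, f x ∂(μ n θ) - ∫ x, φ x ∂(μ n θ)|
        + |∫ x, φ x ∂(μ n θ) - ∫ x, g x ∂(μ n θ)|
        + |∫ x, g x ∂(μ n θ) - ∫ x, g x ∂(ν θ)|
        + |∫ x, g x ∂(ν θ) - ∫ x, φ x ∂(ν θ)|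
        + |∫ x, φ x ∂(ν θ) - ∫ x, f x ∂(ν θ)| := by
    have := abs_sub_le (∫ x, f x ∂(μ n θ)) (∫ x, φ x ∂(μ n θ)) (∫ x, f x ∂(ν θ))
    have := abs_sub_le (∫ x, φ x ∂(μ n θ)) (∫ x, g x ∂(μ n θ)) (∫ x, f x ∂(ν θ))
    have := abs_sub_le (∫ x, g x ∂(μ n θ)) (∫ x, g x ∂(ν θ)) (∫ x, f x ∂(ν θ))
    have := abs_sub_le (∫ x, g x ∂(ν θ)) (∫ x, φ x ∂(ν θ)) (∫ x, f x ∂(ν θ))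
    linarith
  have b4' : |∫ x, g x ∂(ν θ) - ∫ x, φ x ∂(ν θ)| ≤ δ := by
    rw [abs_sub_comm]; exact b4
  have b5'' : |∫ x, φ x ∂(ν θ) - ∫ x, f x ∂(ν θ)| ≤ 2*M*δ := by
    rw [abs_sub_comm]; exact b5'
  calc |∫ x, f x ∂(μ n θ) - ∫ x, f x ∂(ν θ)|
      ≤ _ := tri
    _ < ε := by
        have : 2*M*(6*δ) + δ + δ + δ + 2*M*δ = (14*M+3)*δ := by ring
        linarith [b1', b2, b3, b4', b5'']
end

section
/- Let X be the Volterra CIR process satisfying the variation-of-constants representation X_t = E[X_t] + σ∫₀^t E_β(t−s)√(X_s) dB_s with E[X_t] = 𝓔_β(t)x₀ + b∫₀^t E_β(s)ds, where K satisfies (K1), β < 0, and E_β ∈ L¹(ℝ₊)∩L²(ℝ₊). Then the second moment satisfies E[X_t²] = (E[X_t])² + σ² ∫₀^t E_β(t−s)² E[X_s] ds, and as t → ∞, E[X_t] → m₁ = (x₀ + ‖K‖_{L¹} b)/(1 + ‖K‖_{L¹}|β|) and E[X_t²] → m₁² + m₁ σ² ∫₀^∞ E_β(s)² ds. -/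
open MeasureTheory intervalIntegral Set Filter
open Topology

/-- Complete monotonicity on `(0,∞)`. -/
def CompletelyMonotoneOn (K : ℝ → ℝ) : Prop :=
  ∀ (n : ℕ) (t : ℝ), 0 < t → 0 ≤ (-1 : ℝ) ^ n * iteratedDeriv n K t

/-- Condition (K1). -/
def CondK1 (K : ℝ → ℝ) : Prop :=
  CompletelyMonotoneOn K ∧ (∃ t > (0:ℝ), K t ≠ 0) ∧
  (∀ T > (0 : ℝ), IntegrableOn (fun t => K t ^ 2) (Ioc 0 T)) ∧
  ∃ γ ∈ Ioc (0:ℝ) 1, ∃ M : ℝ, ∀ s t : ℝ, 0 ≤ s → s ≤ t → t - s ≤ 1 →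
    (t - s) ^ (-(2 * γ)) *
      ((∫ r in s..t, K r ^ 2) + ∫ r in Ioi (0:ℝ), (K ((t - s) + r) - K r) ^ 2) ≤ M

/-- Second-moment identity and first/second moment asymptotics for the Volterra CIR
process, encoded through its variation-of-constants representation: the mean is
`m(t) = 𝓔_β(t)x₀ + b∫₀^t E_β`, and the Itô isometry for the martingale part gives
the variance formula. -/
theorem stmt17
    (K : ℝ → ℝ) (hK1 : CondK1 K) (hKL1 : IntegrableOn K (Ioi 0))
    (β σ b x₀ : ℝ) (hβ : β < 0) (hσ : 0 ≤ σ) (hb : 0 ≤ b) (hx₀ : 0 ≤ x₀)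
    (Eb : ℝ → ℝ)
    (hEeq : ∀ t > (0:ℝ), Eb t = K t + β * ∫ s in (0:ℝ)..t, K (t - s) * Eb s)
    (hEL1 : IntegrableOn Eb (Ioi 0))
    (hEL2 : IntegrableOn (fun t => Eb t ^ 2) (Ioi 0))
    {Ω : Type*} [MeasurableSpace Ω] (P : Measure Ω) [IsProbabilityMeasure P]
    (X : ℝ → Ω → ℝ)
    (hXmeas : ∀ t, Measurable (X t))
    (hXnn : ∀ t ω, 0 ≤ X t ω)
    (hXint : ∀ t ≥ (0:ℝ), Integrable (fun ω => (X t ω) ^ 2) P)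
    -- the mean: E[X_t] = 𝓔_β(t) x₀ + b ∫₀^t E_β(s) ds
    (hmean : ∀ t ≥ (0:ℝ), ∫ ω, X t ω ∂P =
      (1 + β * ∫ s in (0:ℝ)..t, Eb s) * x₀ + b * ∫ s in (0:ℝ)..t, Eb s)
    -- Itô isometry for the martingale part X_t − E[X_t] = σ ∫₀^t E_β(t−s)√(X_s) dB_s
    (hiso : ∀ t ≥ (0:ℝ), ∫ ω, (X t ω - ∫ ω', X t ω' ∂P) ^ 2 ∂P =
      σ ^ 2 * ∫ s in (0:ℝ)..t, (Eb (t - s)) ^ 2 * ∫ ω, X s ω ∂P) :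
    (∀ t ≥ (0:ℝ), ∫ ω, (X t ω) ^ 2 ∂P =
      (∫ ω, X t ω ∂P) ^ 2 + σ ^ 2 * ∫ s in (0:ℝ)..t, (Eb (t - s)) ^ 2 * ∫ ω, X s ω ∂P) ∧
    Tendsto (fun t => ∫ ω, X t ω ∂P) atTop
      (nhds ((x₀ + (∫ t in Ioi (0:ℝ), K t) * b) / (1 + (∫ t in Ioi (0:ℝ), K t) * |β|))) ∧
    Tendsto (fun t => ∫ ω, (X t ω) ^ 2 ∂P) atTop
      (nhds (((x₀ + (∫ t in Ioi (0:ℝ), K t) * b) / (1 + (∫ t in Ioi (0:ℝ), K t) * |β|)) ^ 2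
        + ((x₀ + (∫ t in Ioi (0:ℝ), K t) * b) / (1 + (∫ t in Ioi (0:ℝ), K t) * |β|))
          * σ ^ 2 * ∫ s in Ioi (0:ℝ), Eb s ^ 2)) := by
  have hβne : β ≠ 0 := ne_of_lt hβ
  set A : ℝ := ∫ t in Ioi (0:ℝ), K t with hAdef
  set I : ℝ := ∫ t in Ioi (0:ℝ), Eb t with hIdef
  set I₂ : ℝ := ∫ s in Ioi (0:ℝ), Eb s ^ 2 with hI₂def
  -- K is nonnegative on (0,∞)
  have hKnn : ∀ t ∈ Ioi (0:ℝ), 0 ≤ K t := by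
    intro t ht
    have := hK1.1 0 t ht
    simpa [iteratedDeriv_zero] using this
  have hAnn : 0 ≤ A := setIntegral_nonneg measurableSet_Ioi hKnn
  have hD : 0 < 1 - β * A := by nlinarith
  have hDne : (1 : ℝ) - β * A ≠ 0 := ne_of_gt hD
  -- the resolvent convolution identity, integrated
  have hconv_int : IntegrableOn (fun t => ∫ s in (0:ℝ)..t, K (t - s) * Eb s) (Ioi 0) := by
    have h1 : IntegrableOn (fun t => (Eb t - K t) / β) (Ioi 0) := (hEL1.sub hKL1).div_const β
    refine h1.congr_fun (fun t ht => ?_) measurableSet_Ioi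
    have := hEeq t ht
    field_simp [this]
    linarith
  have hposconv : (∫ x in Ioi (0:ℝ), ∫ t in (0:ℝ)..x,
      (ContinuousLinearMap.mul ℝ ℝ) (Eb t) (K (x - t))) =
      (ContinuousLinearMap.mul ℝ ℝ) (∫ x in Ioi (0:ℝ), Eb x) (∫ x in Ioi (0:ℝ), K x) :=
    integral_posConvolution hEL1 hKL1 (ContinuousLinearMap.mul ℝ ℝ)
  simp only [ContinuousLinearMap.mul_apply'] at hposconv
  have hconv_eq : (∫ t in Ioi (0:ℝ), ∫ s in (0:ℝ)..t, K (t - s) * Eb s) = I * A := by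
    rw [← hposconv]
    refine setIntegral_congr_fun measurableSet_Ioi (fun t _ => ?_)
    simp_rw [mul_comm]
  have hIA : I = A + β * (I * A) := by
    have h1 : (∫ t in Ioi (0:ℝ), Eb t) =
        ∫ t in Ioi (0:ℝ), (K t + β * ∫ s in (0:ℝ)..t, K (t - s) * Eb s) :=
      setIntegral_congr_fun measurableSet_Ioi (fun t ht => hEeq t ht)
    have h2 : (∫ t in Ioi (0:ℝ), (K t + β * ∫ s in (0:ℝ)..t, K (t - s) * Eb s))
        = A + β * (I * A) := by
      rw [integral_add hKL1 (hconv_int.const_mul β), MeasureTheory.integral_const_mul, hconv_eq, hAdef]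
    exact h1.trans h2
  have hID : I * (1 - β * A) = A := by linear_combination hIA
  -- the limiting mean
  set mLim : ℝ := x₀ + (β * x₀ + b) * I with hmLimdef
  have habs : |β| = -β := abs_of_neg hβ
  have hLm : (x₀ + A * b) / (1 + A * |β|) = mLim := by
    rw [habs]
    have h1 : (1 : ℝ) + A * -β = 1 - β * A := by ring
    rw [h1, eq_comm, hmLimdef, eq_div_iff hDne]
    linear_combination (β * x₀ + b) * hID
  rw [hLm]
  -- integrability of X t
  have hXint1 : ∀ t ≥ (0:ℝ), Integrable (X t) P := by
    intro t ht
    refine ((hXint t ht).add (integrable_const 1)).mono'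
      (hXmeas t).aestronglyMeasurable (ae_of_all _ fun ω => ?_)
    have h0 := hXnn t ω
    simp only [Real.norm_eq_abs, abs_of_nonneg h0, Pi.add_apply]
    nlinarith [sq_nonneg (X t ω - 1)]
  -- Part 1: second moment identity
  have part1 : ∀ t ≥ (0:ℝ), ∫ ω, (X t ω) ^ 2 ∂P =
      (∫ ω, X t ω ∂P) ^ 2 + σ ^ 2 * ∫ s in (0:ℝ)..t, (Eb (t - s)) ^ 2 * ∫ ω, X s ω ∂P := by
    intro t ht
    have hIso := hiso t ht
    set μt := ∫ ω, X t ω ∂P with hμt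
    have hexp : ∫ ω, (X t ω - μt) ^ 2 ∂P = (∫ ω, (X t ω) ^ 2 ∂P) - μt ^ 2 := by
      have heq : (fun ω => (X t ω - μt) ^ 2) =
          fun ω => ((X t ω) ^ 2 - (2 * μt) * X t ω) + μt ^ 2 := by
        funext ω; ring
      have hf1 : Integrable (fun ω => (X t ω) ^ 2 - (2 * μt) * X t ω) P :=
        (hXint t ht).sub ((hXint1 t ht).const_mul (2 * μt))
      have hf2 : Integrable (fun ω => (2 * μt) * X t ω) P := (hXint1 t ht).const_mul _
      rw [heq, integral_add hf1 (integrable_const _), integral_sub (hXint t ht) hf2,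
        MeasureTheory.integral_const_mul, MeasureTheory.integral_const]
      simp only [Measure.real, measure_univ, ENNReal.toReal_one, smul_eq_mul, one_mul, ← hμt]
      ring
    rw [hexp] at hIso
    linarith
  refine ⟨part1, ?_, ?_⟩
  -- the mean function and its limit
  · have hFto : Tendsto (fun t => ∫ s in (0:ℝ)..t, Eb s) atTop (𝓝 I) :=
      intervalIntegral_tendsto_integral_Ioi 0 hEL1 tendsto_id
    have hto : Tendsto (fun t => (1 + β * ∫ s in (0:ℝ)..t, Eb s) * x₀
        + b * ∫ s in (0:ℝ)..t, Eb s) atTop (𝓝 ((1 + β * I) * x₀ + b * I)) :=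
      (((tendsto_const_nhds.add (hFto.const_mul β)).mul_const x₀)).add (hFto.const_mul b)
    have hval : (1 + β * I) * x₀ + b * I = mLim := by rw [hmLimdef]; ring
    rw [hval] at hto
    refine hto.congr' ?_
    filter_upwards [eventually_ge_atTop (0:ℝ)] with t ht
    exact (hmean t ht).symm
  -- second moment limit
  · -- the zero-extension of Eb and the primitive
    set Ebz : ℝ → ℝ := (Ioi (0:ℝ)).indicator Eb with hEbzdef
    have hEbzInt : Integrable Ebz := (integrable_indicator_iff measurableSet_Ioi).mpr hEL1
    set G : ℝ → ℝ := fun s => ∫ r in (0:ℝ)..s, Ebz r with hGdef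
    have hGcont : Continuous G :=
      intervalIntegral.continuous_primitive (fun a b => hEbzInt.intervalIntegrable) 0
    have hGF : ∀ s : ℝ, 0 ≤ s → G s = ∫ r in (0:ℝ)..s, Eb r := by
      intro s hs
      rw [hGdef]
      simp only [intervalIntegral.integral_of_le hs]
      exact setIntegral_congr_fun measurableSet_Ioc
        (fun r hr => indicator_of_mem (mem_Ioi.mpr hr.1) Eb)
    set N : ℝ := ∫ r in Ioi (0:ℝ), |Eb r| with hNdef
    have hNnn : 0 ≤ N := setIntegral_nonneg measurableSet_Ioi (fun r _ => abs_nonneg _)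
    have habsEbz : ∀ x, |Ebz x| = (Ioi (0:ℝ)).indicator (fun r => |Eb r|) x := by
      intro x
      by_cases h : x ∈ Ioi (0:ℝ) <;> simp [hEbzdef, indicator_of_mem, indicator_of_notMem, h]
    have hGbound : ∀ s, |G s| ≤ N := by
      intro s
      have h1 : |G s| ≤ ∫ r in Set.uIoc (0:ℝ) s, |Ebz r| := by
        simpa [Real.norm_eq_abs] using
          intervalIntegral.norm_integral_le_integral_norm_uIoc (f := Ebz) (a := (0:ℝ)) (b := s)
      have h2 : (∫ r in Set.uIoc (0:ℝ) s, |Ebz r|) ≤ ∫ r, |Ebz r| := by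
        refine setIntegral_le_integral hEbzInt.abs (ae_of_all _ fun r => abs_nonneg _)
      have h3 : (∫ r, |Ebz r|) = N := by
        simp_rw [habsEbz]
        rw [MeasureTheory.integral_indicator measurableSet_Ioi, hNdef]
      linarith
    -- the deterministic mean function M
    set M : ℝ → ℝ := fun s => x₀ + (β * x₀ + b) * G s with hMdef
    have hMcont : Continuous M := continuous_const.add (continuous_const.mul hGcont)
    set C : ℝ := |x₀| + |β * x₀ + b| * N with hCdef
    have hMb : ∀ s, |M s| ≤ C := by
      intro s
      calc |M s| ≤ |x₀| + |(β * x₀ + b) * G s| := abs_add_le _ _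
        _ = |x₀| + |β * x₀ + b| * |G s| := by rw [abs_mul]
        _ ≤ |x₀| + |β * x₀ + b| * N := by
            have := hGbound s
            nlinarith [abs_nonneg (β * x₀ + b)]
    have hCnn : 0 ≤ C := by positivity
    have hmM : ∀ s : ℝ, 0 ≤ s → (∫ ω, X s ω ∂P) = M s := by
      intro s hs
      have hMs : M s = x₀ + (β * x₀ + b) * ∫ r in (0:ℝ)..s, Eb r := by
        simp only [hMdef]
        rw [hGF s hs]
      rw [hmean s hs, hMs]
      ring
    -- G tends to I
    have hGto : Tendsto G atTop (𝓝 I) := by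
      have h1 : Tendsto G atTop (𝓝 (∫ r in Ioi (0:ℝ), Ebz r)) :=
        intervalIntegral_tendsto_integral_Ioi 0 hEbzInt.integrableOn tendsto_id
      have h2 : (∫ r in Ioi (0:ℝ), Ebz r) = I := by
        rw [hIdef]
        exact setIntegral_congr_fun measurableSet_Ioi
          (fun r hr => indicator_of_mem hr Eb)
      rwa [h2] at h1
    have hMto : Tendsto M atTop (𝓝 mLim) :=
      tendsto_const_nhds.add (hGto.const_mul _)
    -- dominated convergence for V t
    set F : ℝ → ℝ → ℝ := fun t => (Ioc (0:ℝ) t).indicator (fun u => Eb u ^ 2 * M (t - u))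
      with hFdef
    have hμ : ∀ t : ℝ, 0 ≤ t →
        (∫ s in (0:ℝ)..t, (Eb (t - s)) ^ 2 * ∫ ω, X s ω ∂P)
          = ∫ u in Ioi (0:ℝ), F t u := by
      intro t ht
      have h1 : (∫ s in (0:ℝ)..t, (Eb (t - s)) ^ 2 * ∫ ω, X s ω ∂P)
          = ∫ s in (0:ℝ)..t, (Eb (t - s)) ^ 2 * M s := by
        refine intervalIntegral.integral_congr (fun s hs => ?_)
        rw [uIcc_of_le ht] at hs
        rw [hmM s hs.1]
      have h2 : (∫ s in (0:ℝ)..t, (Eb (t - s)) ^ 2 * M s)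
          = ∫ u in (0:ℝ)..t, Eb u ^ 2 * M (t - u) := by
        have := intervalIntegral.integral_comp_sub_left
          (a := (0:ℝ)) (b := t) (fun u => Eb u ^ 2 * M (t - u)) t
        simp only [sub_sub_cancel, sub_zero, sub_self] at this
        exact this
      have h3 : (∫ u in Ioi (0:ℝ), F t u) = ∫ u in Ioc (0:ℝ) t, Eb u ^ 2 * M (t - u) := by
        simp only [hFdef]
        rw [MeasureTheory.integral_indicator measurableSet_Ioc,
          Measure.restrict_restrict measurableSet_Ioc,
          inter_eq_left.mpr Ioc_subset_Ioi_self]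
      rw [h1, h2, intervalIntegral.integral_of_le ht, h3]
    have hDCT : Tendsto (fun t => ∫ u in Ioi (0:ℝ), F t u) atTop
        (𝓝 (∫ u in Ioi (0:ℝ), Eb u ^ 2 * mLim)) := by
      refine tendsto_integral_filter_of_dominated_convergence (fun u => C * Eb u ^ 2)
        ?_ ?_ (hEL2.const_mul C) ?_
      · filter_upwards with t
        exact (hEL2.aestronglyMeasurable.mul
          ((hMcont.comp (continuous_const.sub continuous_id)).aestronglyMeasurable.restrict)).indicator
          measurableSet_Ioc
      · filter_upwards with t
        refine ae_of_all _ fun u => ?_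
        simp only [hFdef]
        by_cases h : u ∈ Ioc (0:ℝ) t
        · rw [indicator_of_mem h]
          have h1 : |Eb u ^ 2 * M (t - u)| = Eb u ^ 2 * |M (t - u)| := by
            rw [abs_mul, abs_of_nonneg (sq_nonneg _)]
          rw [Real.norm_eq_abs, h1]
          have := hMb (t - u)
          nlinarith [sq_nonneg (Eb u)]
        · rw [indicator_of_notMem h]
          simp only [norm_zero]
          positivity
      · refine (ae_restrict_iff' measurableSet_Ioi).mpr (ae_of_all _ fun u hu => ?_)
        have h1 : Tendsto (fun t => Eb u ^ 2 * M (t - u)) atTop (𝓝 (Eb u ^ 2 * mLim)) := by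
          refine Tendsto.const_mul _ (hMto.comp ?_)
          simpa [sub_eq_add_neg] using tendsto_atTop_add_const_right atTop (-u) tendsto_id
        refine h1.congr' ?_
        filter_upwards [eventually_ge_atTop u] with t htu
        simp only [hFdef]
        rw [indicator_of_mem (mem_Ioc.mpr ⟨mem_Ioi.mp hu, htu⟩)]
    have hVlim : (∫ u in Ioi (0:ℝ), Eb u ^ 2 * mLim) = I₂ * mLim := by
      rw [hI₂def, ← MeasureTheory.integral_mul_const]
    rw [hVlim] at hDCT
    -- assemble
    have hmTo : Tendsto (fun t => ∫ ω, X t ω ∂P) atTop (𝓝 mLim) := by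
      have h1 : Tendsto (fun t : ℝ => M t) atTop (𝓝 mLim) := hMto
      refine h1.congr' ?_
      filter_upwards [eventually_ge_atTop (0:ℝ)] with t ht
      exact (hmM t ht).symm
    have hfinal : Tendsto (fun t => (∫ ω, X t ω ∂P) ^ 2
        + σ ^ 2 * ∫ s in (0:ℝ)..t, (Eb (t - s)) ^ 2 * ∫ ω, X s ω ∂P) atTop
        (𝓝 (mLim ^ 2 + σ ^ 2 * (I₂ * mLim))) := by
      refine (hmTo.pow 2).add (Tendsto.const_mul _ ?_)
      refine hDCT.congr' ?_
      filter_upwards [eventually_ge_atTop (0:ℝ)] with t ht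
      exact (hμ t ht).symm
    have hval : mLim ^ 2 + σ ^ 2 * (I₂ * mLim) = mLim ^ 2 + mLim * σ ^ 2 * I₂ := by ring
    rw [hval] at hfinal
    refine hfinal.congr' ?_
    filter_upwards [eventually_ge_atTop (0:ℝ)] with t ht
    exact (part1 t ht).symm
end
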